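/- Let G be a finite simple connected graph with monitors M and non-monitors N, |N| = σ ≥ 2. If two distinct nodes u, v ∈ N each have at most one monitor neighbor, then N is not (σ−1)-identifiable under CSP. -/
import Mathlib


variable {V : Type*} [Fintype V] [DecidableEq V]

/-- A CSP measurement path: a simple path whose endpoints are two distinct monitors
and whose internal vertices are all non-monitors. -/
def IsCSPPath (G : SimpleGraph V) (M : Finset V) {a b : V} (p : G.Walk a b) : Prop :=
  p.IsPath ∧ a ∈ M ∧ b ∈ M ∧ a ≠ b ∧ ∀ x ∈ p.support, x ≠ a → x ≠ b → x ∉ M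

/-- \`S\` (a set of non-monitors) is \`k\`-identifiable under CSP: any two failure sets of
non-monitors of size at most \`k\` that differ within \`S\` yield different failure states
on some CSP path (a path fails iff it contains a failed node). -/
def cspIdent (G : SimpleGraph V) (M : Finset V) (S : Finset V) (k : ℕ) : Prop :=
  ∀ F₁ F₂ : Finset V, F₁ ⊆ Mᶜ → F₂ ⊆ Mᶜ → F₁.card ≤ k → F₂.card ≤ k →
    F₁ ∩ S ≠ F₂ ∩ S → ∃ (a b : V) (p : G.Walk a b), IsCSPPath G M p ∧
      Xor' (∀ x ∈ p.support, x ∉ F₁) (∀ x ∈ p.support, x ∉ F₂)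

/-- If a path has all its "internal" vertices equal to a single vertex `w`,
and `w` occurs internally, then `w` is adjacent to both endpoints. -/
lemma internal_single_adj {G : SimpleGraph V} {w a b : V}
    (p : G.Walk a b) (hp : p.IsPath)
    (hall : ∀ x ∈ p.support, x ≠ a → x ≠ b → x = w)
    (hw : w ∈ p.support) (hwa : w ≠ a) (hwb : w ≠ b) :
    G.Adj a w ∧ G.Adj w b := by
  cases p with
  | nil =>
    simp only [SimpleGraph.Walk.support_nil, List.mem_singleton] at hw
    exact absurd hw hwa
  | @cons _ c _ h q =>
    cases q with
    | nil =>
      simp only [SimpleGraph.Walk.support_cons, SimpleGraph.Walk.support_nil,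
        List.mem_cons, List.mem_singleton] at hw
      rcases hw with h1 | h1 | h1 <;> simp_all
    | @cons _ d _ h' r =>
      -- support = a :: c :: r.support
      have hnd : (a :: c :: r.support).Nodup := by
        simpa [SimpleGraph.Walk.support_cons] using hp.support_nodup
      have hca : c ≠ a := by
        intro hh; exact (List.nodup_cons.1 hnd).1 (by simp [hh])
      have hcb : c ≠ b := by
        intro hh
        have : c ∉ r.support := (List.nodup_cons.1 (List.nodup_cons.1 hnd).2).1
        exact this (hh ▸ r.end_mem_support)
      have hcmem : c ∈ (SimpleGraph.Walk.cons h (SimpleGraph.Walk.cons h' r)).support := by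
        simp [SimpleGraph.Walk.support_cons]
      have hcw : c = w := hall c hcmem hca hcb
      have hdb : d = b := by
        by_contra hdb
        have hdmem : d ∈ (SimpleGraph.Walk.cons h (SimpleGraph.Walk.cons h' r)).support := by
          simp [SimpleGraph.Walk.support_cons, r.start_mem_support]
        have hda : d ≠ a := by
          intro hh
          exact (List.nodup_cons.1 hnd).1 (by simp [← hh, r.start_mem_support])
        have hdw : d = w := hall d hdmem hda hdb
        have : c ∉ r.support := (List.nodup_cons.1 (List.nodup_cons.1 hnd).2).1
        exact this (by rw [hcw, ← hdw]; exact r.start_mem_support)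
      exact ⟨hcw ▸ h, by rw [← hcw, ← hdb]; exact h'⟩

theorem two_weak_nodes_not_identifiable (G : SimpleGraph V) [DecidableRel G.Adj]
    (hG : G.Connected) (M : Finset V) (u v : V) (hu : u ∉ M) (hv : v ∉ M)
    (huv : u ≠ v) (hσ : 2 ≤ (Mᶜ : Finset V).card)
    (hmu : (G.neighborFinset u ∩ M).card ≤ 1)
    (hmv : (G.neighborFinset v ∩ M).card ≤ 1) :
    ¬ cspIdent G M Mᶜ (Mᶜ.card - 1) := by
  intro hid
  set F₁ : Finset V := Mᶜ \ {v} with hF₁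
  set F₂ : Finset V := Mᶜ \ {u} with hF₂
  have huc : u ∈ (Mᶜ : Finset V) := Finset.mem_compl.2 hu
  have hvc : v ∈ (Mᶜ : Finset V) := Finset.mem_compl.2 hv
  have hsub1 : F₁ ⊆ Mᶜ := Finset.sdiff_subset
  have hsub2 : F₂ ⊆ Mᶜ := Finset.sdiff_subset
  have hc1 : F₁.card ≤ Mᶜ.card - 1 := by
    rw [hF₁, Finset.card_sdiff_of_subset (by simpa using hvc)]; simp
  have hc2 : F₂.card ≤ Mᶜ.card - 1 := by
    rw [hF₂, Finset.card_sdiff_of_subset (by simpa using huc)]; simp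
  have hne : F₁ ∩ Mᶜ ≠ F₂ ∩ Mᶜ := by
    rw [Finset.inter_eq_left.2 hsub1, Finset.inter_eq_left.2 hsub2]
    intro hh
    have hu1 : u ∈ F₁ := Finset.mem_sdiff.2 ⟨huc, by simp [huv]⟩
    have hu2 : u ∉ F₂ := by simp [hF₂]
    exact hu2 (hh ▸ hu1)
  obtain ⟨a, b, p, hcsp, hxor⟩ := hid F₁ F₂ hsub1 hsub2 hc1 hc2 hne
  obtain ⟨hp, haM, hbM, hab, hint⟩ := hcsp
  have key : ∀ (w : V) (Fw Fo : Finset V), w ∉ M →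
      (G.neighborFinset w ∩ M).card ≤ 1 →
      Fw = Mᶜ \ {w} → Fo ⊆ Mᶜ →
      (∀ x ∈ p.support, x ∉ Fw) → ¬(∀ x ∈ p.support, x ∉ Fo) → False := by
    intro w Fw Fo hwM hmw hFw hFo h1 h2
    push_neg at h2
    obtain ⟨x, hxs, hxF⟩ := h2
    have hxMc : x ∈ (Mᶜ : Finset V) := hFo hxF
    have hxM : x ∉ M := Finset.mem_compl.1 hxMc
    have hxa : x ≠ a := fun hh => hxM (hh ▸ haM)
    have hxb : x ≠ b := fun hh => hxM (hh ▸ hbM)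
    have hall : ∀ y ∈ p.support, y ≠ a → y ≠ b → y = w := by
      intro y hy hya hyb
      have hyM : y ∉ M := hint y hy hya hyb
      have := h1 y hy
      rw [hFw, Finset.mem_sdiff] at this
      push_neg at this
      simpa using this (Finset.mem_compl.2 hyM)
    have hxw : x = w := hall x hxs hxa hxb
    have hwa : w ≠ a := fun hh => hwM (hh ▸ haM)
    have hwb : w ≠ b := fun hh => hwM (hh ▸ hbM)
    obtain ⟨h1', h2'⟩ := internal_single_adj p hp hall (hxw ▸ hxs) hwa hwb
    have hsub : ({a, b} : Finset V) ⊆ G.neighborFinset w ∩ M := by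
      intro y hy
      rcases Finset.mem_insert.1 hy with rfl | hy
      · exact Finset.mem_inter.2 ⟨by simpa using h1'.symm, haM⟩
      · rw [Finset.mem_singleton.1 hy]
        exact Finset.mem_inter.2 ⟨by simpa using h2', hbM⟩
    have : 2 ≤ (G.neighborFinset w ∩ M).card := by
      calc 2 = ({a, b} : Finset V).card := (Finset.card_pair hab).symm
        _ ≤ _ := Finset.card_le_card hsub
    omega
  rcases hxor with ⟨h1, h2⟩ | ⟨h2, h1⟩
  · exact key v F₁ F₂ hv hmv rfl hsub2 h1 h2
  · exact key u F₂ F₁ hu hmu rfl hsub1 h2 h1
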